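/- There exists an absolute constant C > 0 such that for all probability measures ν and ν′ on ℝ supported in the interval [−2, 1], the Gaussian mixture densities f(x) = ∫ g_μ(x) dν(μ) and f′(x) = ∫ g_μ(x) dν′(μ) satisfy ‖f − f′‖₁ ≤ C · ‖f − f′‖₂^{2/3}. -/

import Mathlib

open MeasureTheory Real

/-- The unit-variance Gaussian density centered at `μ`. -/
noncomputable def gauss (μ x : ℝ) : ℝ := (Real.sqrt (2 * Real.pi))⁻¹ * Real.exp (-(x - μ)^2 / 2)

/-- The Gaussian mixture density with mixing measure `ν`. -/
noncomputable def mix (ν : Measure ℝ) (x : ℝ) : ℝ := ∫ μ, gauss μ x ∂ν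

lemma gauss_eq_pdf (μ : ℝ) : gauss μ = ProbabilityTheory.gaussianPDFReal μ 1 := by
  ext x
  simp [gauss, ProbabilityTheory.gaussianPDFReal]

lemma gauss_nonneg (μ x : ℝ) : 0 ≤ gauss μ x := by
  unfold gauss; positivity

lemma integrable_gauss (μ : ℝ) : Integrable (gauss μ) := by
  rw [gauss_eq_pdf]; exact ProbabilityTheory.integrable_gaussianPDFReal μ 1

lemma integral_gauss (μ : ℝ) : ∫ x, gauss μ x = 1 := by
  rw [gauss_eq_pdf]; exact ProbabilityTheory.integral_gaussianPDFReal_eq_one μ one_ne_zero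

lemma cont_gauss : Continuous (fun p : ℝ × ℝ => gauss p.1 p.2) := by
  unfold gauss; fun_prop

lemma gauss_le_one (μ x : ℝ) : gauss μ x ≤ 1 := by
  unfold gauss
  have h1 : Real.exp (-(x - μ)^2 / 2) ≤ 1 := by
    rw [Real.exp_le_one_iff]
    nlinarith [sq_nonneg (x - μ)]
  have h2 : (1:ℝ) ≤ Real.sqrt (2 * Real.pi) := by
    rw [show (1:ℝ) = Real.sqrt 1 by simp]
    exact Real.sqrt_le_sqrt (by nlinarith [Real.pi_gt_three])
  have h3 : (Real.sqrt (2 * Real.pi))⁻¹ ≤ 1 := inv_le_one_of_one_le₀ h2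
  nlinarith [Real.exp_nonneg (-(x - μ)^2 / 2), inv_nonneg.mpr (Real.sqrt_nonneg (2 * Real.pi))]

lemma abs_mul_exp_le (t : ℝ) : |t| * rexp (-t^2/2) ≤ rexp (-t^2/4) := by
  have h2 : |t| ≤ t^2/4 + 1 := by nlinarith [sq_nonneg (|t| - 2), sq_abs t]
  have h3 := Real.add_one_le_exp (t^2/4)
  calc |t| * rexp (-t^2/2) ≤ rexp (t^2/4) * rexp (-t^2/2) :=
        mul_le_mul_of_nonneg_right (by linarith) (Real.exp_nonneg _)
    _ = rexp (-t^2/4) := by rw [← Real.exp_add]; ring_nf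

lemma integrable_exp_quarter (μ : ℝ) : Integrable (fun x : ℝ => rexp (-(x - μ)^2/4)) := by
  have h : (fun x : ℝ => rexp (-x^2/4)) = fun x => rexp (-(4:ℝ)⁻¹ * x^2) := by
    funext x; ring_nf
  have h2 : Integrable (fun x : ℝ => rexp (-x^2/4)) := by
    rw [h]; exact integrable_exp_neg_mul_sq (by norm_num)
  simpa using h2.comp_sub_right μ

lemma integral_exp_quarter (μ : ℝ) : ∫ x, rexp (-(x - μ)^2/4) = Real.sqrt (4 * π) := by
  rw [show (fun x : ℝ => rexp (-(x - μ)^2/4)) = fun x => (fun y : ℝ => rexp (-(4:ℝ)⁻¹ * y^2)) (x - μ) by funext x; ring_nf]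
  rw [integral_sub_right_eq_self (fun y : ℝ => rexp (-(4:ℝ)⁻¹ * y^2)) μ]
  rw [integral_gaussian]
  norm_num [mul_comm]
  ring

lemma integral_exp_half (μ : ℝ) : ∫ x, rexp (-(x - μ)^2/2) = Real.sqrt (2 * π) := by
  rw [show (fun x : ℝ => rexp (-(x - μ)^2/2)) = fun x => (fun y : ℝ => rexp (-(2:ℝ)⁻¹ * y^2)) (x - μ) by funext x; ring_nf]
  rw [integral_sub_right_eq_self (fun y : ℝ => rexp (-(2:ℝ)⁻¹ * y^2)) μ]
  rw [integral_gaussian]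
  norm_num [mul_comm]

lemma sqrt_four_pi_le : Real.sqrt (4 * π) ≤ 2 * Real.sqrt (2 * π) := by
  have h : Real.sqrt (4 * (2 * π)) = 2 * Real.sqrt (2 * π) := by
    rw [Real.sqrt_mul (by norm_num), show (4:ℝ) = 2^2 by norm_num, Real.sqrt_sq (by norm_num)]
  rw [← h]
  exact Real.sqrt_le_sqrt (by nlinarith [Real.pi_pos])

lemma cont_gauss_x (μ : ℝ) : Continuous (gauss μ) := by
  unfold gauss; fun_prop

lemma abs_gauss_le (μ x : ℝ) :
    |x| * gauss μ x ≤ (Real.sqrt (2*π))⁻¹ * rexp (-(x-μ)^2/4) + |μ| * gauss μ x := by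
  have hc : (0:ℝ) ≤ (Real.sqrt (2*π))⁻¹ := inv_nonneg.mpr (Real.sqrt_nonneg _)
  have habs : |x| ≤ |x - μ| + |μ| := by
    calc |x| = |(x - μ) + μ| := by ring_nf
      _ ≤ |x - μ| + |μ| := abs_add_le _ _
  have he : (0:ℝ) ≤ rexp (-(x-μ)^2/2) := Real.exp_nonneg _
  calc |x| * gauss μ x = (Real.sqrt (2*π))⁻¹ * (|x| * rexp (-(x-μ)^2/2)) := by
        unfold gauss; ring
    _ ≤ (Real.sqrt (2*π))⁻¹ * ((|x - μ| + |μ|) * rexp (-(x-μ)^2/2)) := by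
        apply mul_le_mul_of_nonneg_left (mul_le_mul_of_nonneg_right habs he) hc
    _ = (Real.sqrt (2*π))⁻¹ * (|x - μ| * rexp (-(x-μ)^2/2))
        + |μ| * ((Real.sqrt (2*π))⁻¹ * rexp (-(x-μ)^2/2)) := by ring
    _ ≤ (Real.sqrt (2*π))⁻¹ * rexp (-(x-μ)^2/4) + |μ| * gauss μ x := by
        unfold gauss
        exact add_le_add (mul_le_mul_of_nonneg_left (abs_mul_exp_le (x - μ)) hc) le_rfl

lemma integrable_bnd (μ : ℝ) :
    Integrable (fun x => (Real.sqrt (2*π))⁻¹ * rexp (-(x-μ)^2/4) + |μ| * gauss μ x) :=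
  ((integrable_exp_quarter μ).const_mul _).add ((integrable_gauss μ).const_mul _)

lemma integrable_abs_gauss (μ : ℝ) : Integrable (fun x => |x| * gauss μ x) := by
  apply Integrable.mono' (integrable_bnd μ)
    ((continuous_abs.mul (cont_gauss_x μ)).aestronglyMeasurable)
  refine Filter.Eventually.of_forall fun x => ?_
  rw [Pi.mul_apply, Real.norm_of_nonneg (mul_nonneg (abs_nonneg _) (gauss_nonneg _ _))]
  exact abs_gauss_le μ x

lemma integral_abs_gauss_le (μ : ℝ) : ∫ x, |x| * gauss μ x ≤ 2 + |μ| := by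
  have h1 : ∫ x, |x| * gauss μ x
      ≤ ∫ x, ((Real.sqrt (2*π))⁻¹ * rexp (-(x-μ)^2/4) + |μ| * gauss μ x) := by
    apply integral_mono_of_nonneg
      (Filter.Eventually.of_forall fun x => mul_nonneg (abs_nonneg _) (gauss_nonneg _ _))
      (integrable_bnd μ) (Filter.Eventually.of_forall (abs_gauss_le μ))
  have h2 : ∫ x, ((Real.sqrt (2*π))⁻¹ * rexp (-(x-μ)^2/4) + |μ| * gauss μ x)
      = (Real.sqrt (2*π))⁻¹ * Real.sqrt (4*π) + |μ| * 1 := by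
    rw [integral_add ((integrable_exp_quarter μ).const_mul _) ((integrable_gauss μ).const_mul _),
      integral_const_mul, integral_const_mul, integral_exp_quarter, integral_gauss]
  have h3 : (Real.sqrt (2*π))⁻¹ * Real.sqrt (4*π) ≤ 2 := by
    have hpos : (0:ℝ) < Real.sqrt (2*π) := Real.sqrt_pos.mpr (by positivity)
    have h2' : (Real.sqrt (2*π))⁻¹ * (2*Real.sqrt (2*π)) = 2 := by field_simp
    nlinarith [sqrt_four_pi_le, inv_nonneg.mpr (Real.sqrt_nonneg (2*π))]
  linarith [h1, h2 ▸ h1]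



lemma mix_sm (ν : Measure ℝ) [SFinite ν] : StronglyMeasurable (mix ν) := by
  have h : StronglyMeasurable (Function.uncurry gauss) := by
    have : Function.uncurry gauss = fun p : ℝ × ℝ => gauss p.1 p.2 := rfl
    rw [this]; exact cont_gauss.stronglyMeasurable
  exact h.integral_prod_left

lemma mix_nonneg (ν : Measure ℝ) (x : ℝ) : 0 ≤ mix ν x :=
  integral_nonneg fun μ => gauss_nonneg μ x

lemma mix_le_one (ν : Measure ℝ) [IsProbabilityMeasure ν] (x : ℝ) : mix ν x ≤ 1 := by
  have h := integral_mono_of_nonneg (μ := ν)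
    (Filter.Eventually.of_forall fun μ => gauss_nonneg μ x) (integrable_const (1:ℝ))
    (Filter.Eventually.of_forall fun μ => gauss_le_one μ x)
  simpa [mix] using h

lemma ae_mem_Icc {ν : Measure ℝ} (hν : ν (Set.Icc (-2:ℝ) 1)ᶜ = 0) :
    ∀ᵐ μ ∂ν, μ ∈ Set.Icc (-2:ℝ) 1 := by
  rw [ae_iff]; exact hν

lemma integrable_mix (ν : Measure ℝ) [IsProbabilityMeasure ν] : Integrable (mix ν) := by
  have hK : Integrable (fun p : ℝ × ℝ => gauss p.1 p.2) (ν.prod volume) := by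
    rw [integrable_prod_iff cont_gauss.aestronglyMeasurable]
    refine ⟨Filter.Eventually.of_forall fun μ => integrable_gauss μ, ?_⟩
    have : (fun μ : ℝ => ∫ x, ‖gauss μ x‖) = fun _ => (1:ℝ) := by
      funext μ
      simp_rw [Real.norm_of_nonneg (gauss_nonneg _ _)]
      exact integral_gauss μ
    rw [this]; exact integrable_const 1
  exact hK.integral_prod_right

lemma integrable_K (ν : Measure ℝ) [IsProbabilityMeasure ν] (hν : ν (Set.Icc (-2:ℝ) 1)ᶜ = 0) :
    Integrable (fun p : ℝ × ℝ => |p.2| * gauss p.1 p.2) (ν.prod volume) := by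
  rw [integrable_prod_iff (f := fun p : ℝ × ℝ => |p.2| * gauss p.1 p.2) (continuous_snd.abs.mul cont_gauss).aestronglyMeasurable]
  refine ⟨Filter.Eventually.of_forall fun μ => integrable_abs_gauss μ, ?_⟩
  have hsm : StronglyMeasurable fun μ : ℝ => ∫ x, ‖|x| * gauss μ x‖ := by
    apply StronglyMeasurable.integral_prod_right' (f := fun p : ℝ × ℝ => ‖|p.2| * gauss p.1 p.2‖)
    exact (continuous_snd.abs.mul cont_gauss).norm.stronglyMeasurable
  apply Integrable.mono' (integrable_const (4:ℝ)) hsm.aestronglyMeasurable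
  filter_upwards [ae_mem_Icc hν] with μ hμ
  have hnn : ∀ x : ℝ, ‖|x| * gauss μ x‖ = |x| * gauss μ x := fun x =>
    Real.norm_of_nonneg (mul_nonneg (abs_nonneg _) (gauss_nonneg _ _))
  simp_rw [hnn]
  rw [Real.norm_of_nonneg (integral_nonneg fun x => mul_nonneg (abs_nonneg _) (gauss_nonneg _ _))]
  have habs : |μ| ≤ 2 := abs_le.mpr ⟨hμ.1, by linarith [hμ.2]⟩
  linarith [integral_abs_gauss_le μ]

lemma integrable_abs_mix (ν : Measure ℝ) [IsProbabilityMeasure ν]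
    (hν : ν (Set.Icc (-2:ℝ) 1)ᶜ = 0) :
    Integrable (fun x => |x| * mix ν x) := by
  have h := (integrable_K ν hν).integral_prod_right
  have heq : (fun x : ℝ => ∫ μ, |x| * gauss μ x ∂ν) = fun x => |x| * mix ν x := by
    funext x; exact integral_const_mul _ _
  rw [← heq]; exact h

lemma integral_abs_mix_le (ν : Measure ℝ) [IsProbabilityMeasure ν]
    (hν : ν (Set.Icc (-2:ℝ) 1)ᶜ = 0) :
    ∫ x, |x| * mix ν x ≤ 4 := by
  have hswap := integral_integral_swap (f := fun μ x : ℝ => |x| * gauss μ x)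
    (μ := ν) (ν := volume) (integrable_K ν hν)
  have heq : (fun x : ℝ => ∫ μ, |x| * gauss μ x ∂ν) = fun x => |x| * mix ν x := by
    funext x; exact integral_const_mul _ _
  have h2 : ∫ μ, (∫ x, |x| * gauss μ x) ∂ν ≤ ∫ _μ, (4:ℝ) ∂ν := by
    apply integral_mono_of_nonneg
      (Filter.Eventually.of_forall fun μ =>
        integral_nonneg fun x => mul_nonneg (abs_nonneg _) (gauss_nonneg _ _))
      (integrable_const 4)
    filter_upwards [ae_mem_Icc hν] with μ hμ
    have habs : |μ| ≤ 2 := abs_le.mpr ⟨hμ.1, by linarith [hμ.2]⟩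
    linarith [integral_abs_gauss_le μ]
  have h4 : ∫ x, |x| * mix ν x = ∫ μ, (∫ x, |x| * gauss μ x) ∂ν := by
    rw [← heq]
    exact hswap.symm
  have h3 : ∫ _μ, (4:ℝ) ∂ν = 4 := by simp
  rw [h4]
  linarith

theorem stmt6 :
    ∃ C > (0:ℝ), ∀ ν ν' : Measure ℝ,
      IsProbabilityMeasure ν → IsProbabilityMeasure ν' →
      ν (Set.Icc (-2 : ℝ) 1)ᶜ = 0 → ν' (Set.Icc (-2 : ℝ) 1)ᶜ = 0 →
      (∫ x, |mix ν x - mix ν' x|)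
        ≤ C * (Real.sqrt (∫ x, (mix ν x - mix ν' x)^2)) ^ ((2:ℝ)/3) := by
  refine ⟨11, by norm_num, fun ν ν' hp hp' hν hν' => ?_⟩
  set h : ℝ → ℝ := fun x => mix ν x - mix ν' x with hh_def
  have hh_int : Integrable h := (integrable_mix ν).sub (integrable_mix ν')
  have habs : Integrable (fun x => |h x|) := hh_int.abs
  have habs_le : ∀ x, |h x| ≤ mix ν x + mix ν' x := by
    intro x
    have := abs_sub (mix ν x) (mix ν' x)
    calc |h x| = |mix ν x - mix ν' x| := rfl
      _ ≤ |mix ν x| + |mix ν' x| := abs_sub _ _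
      _ = mix ν x + mix ν' x := by
          rw [abs_of_nonneg (mix_nonneg ν x), abs_of_nonneg (mix_nonneg ν' x)]
  have hsq_int : Integrable (fun x => h x ^ 2) := by
    apply Integrable.mono' (((integrable_mix ν).add (integrable_mix ν')).const_mul 2)
      ((((mix_sm ν).measurable.sub (mix_sm ν').measurable).pow_const 2).aestronglyMeasurable)
    refine Filter.Eventually.of_forall fun x => ?_
    rw [Real.norm_of_nonneg (sq_nonneg _)]
    simp only [Pi.add_apply]
    change h x ^ 2 ≤ 2 * (mix ν x + mix ν' x)
    nlinarith [mix_nonneg ν x, mix_nonneg ν' x, mix_le_one ν x, mix_le_one ν' x,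
      habs_le x, sq_abs (h x), abs_nonneg (h x),
      mul_self_le_mul_self (abs_nonneg (h x)) (habs_le x)]
  have hsq_nonneg : 0 ≤ ∫ x, h x ^ 2 := integral_nonneg fun x => sq_nonneg _
  have hxh_int : Integrable (fun x => |x| * |h x|) := by
    apply Integrable.mono' ((integrable_abs_mix ν hν).add (integrable_abs_mix ν' hν'))
      ((continuous_abs.measurable.mul
        (((mix_sm ν).measurable.sub (mix_sm ν').measurable).abs)).aestronglyMeasurable)
    refine Filter.Eventually.of_forall fun x => ?_
    change ‖|x| * |h x|‖ ≤ ((fun x => |x| * mix ν x) + fun x => |x| * mix ν' x) x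
    rw [Real.norm_of_nonneg (mul_nonneg (abs_nonneg _) (abs_nonneg _))]
    simp only [Pi.add_apply]
    nlinarith [mul_le_mul_of_nonneg_left (habs_le x) (abs_nonneg x)]
  have hxh_le : ∫ x, |x| * |h x| ≤ 8 := by
    have h1 : ∫ x, |x| * |h x| ≤ ∫ x, (|x| * mix ν x + |x| * mix ν' x) := by
      apply integral_mono hxh_int ((integrable_abs_mix ν hν).add (integrable_abs_mix ν' hν'))
      intro x
      simp only [Pi.add_apply]
      nlinarith [mul_le_mul_of_nonneg_left (habs_le x) (abs_nonneg x)]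
    rw [integral_add (integrable_abs_mix ν hν) (integrable_abs_mix ν' hν')] at h1
    linarith [integral_abs_mix_le ν hν, integral_abs_mix_le ν' hν']
  -- master inequality
  have master : ∀ T δ : ℝ, 0 < T → 0 < δ →
      (∫ x, |h x|) ≤ (∫ x, h x ^ 2)/(2*δ) + δ*T + 8/T := by
    intro T δ hT hδ
    have hs : MeasurableSet (Set.Icc (-T) T) := measurableSet_Icc
    have hsplit : (∫ x in Set.Icc (-T) T, |h x|) + ∫ x in (Set.Icc (-T) T)ᶜ, |h x|
        = ∫ x, |h x| := integral_add_compl hs habs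
    have hbulk : ∫ x in Set.Icc (-T) T, |h x| ≤ (∫ x, h x ^ 2)/(2*δ) + δ*T := by
      have hconst : IntegrableOn (fun _ : ℝ => δ/2) (Set.Icc (-T) T) := by
        apply (integrableOn_const_iff (C := δ/2)).mpr
        exact Or.inr measure_Icc_lt_top
      have hmono : ∫ x in Set.Icc (-T) T, |h x|
          ≤ ∫ x in Set.Icc (-T) T, (h x ^ 2/(2*δ) + δ/2) := by
        apply setIntegral_mono_on habs.integrableOn
          (((hsq_int.div_const _).integrableOn).add hconst) hs
        intro x _
        have h1 : 2*δ*|h x| ≤ h x ^2 + δ^2 := by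
          nlinarith [sq_nonneg (|h x| - δ), sq_abs (h x)]
        calc |h x| = (2*δ*|h x|)/(2*δ) := by field_simp
          _ ≤ (h x ^2 + δ^2)/(2*δ) := by gcongr
          _ = h x ^2/(2*δ) + δ/2 := by field_simp
      have hsum : ∫ x in Set.Icc (-T) T, (h x ^ 2/(2*δ) + δ/2)
          = (∫ x in Set.Icc (-T) T, h x ^ 2)/(2*δ) + (volume (Set.Icc (-T) T)).toReal * (δ/2) := by
        rw [integral_add ((hsq_int.div_const _).integrableOn) hconst, integral_div,
          setIntegral_const, smul_eq_mul]
        rfl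
      have hvol : (volume (Set.Icc (-T) T)).toReal * (δ/2) = δ * T := by
        rw [Real.volume_Icc, ENNReal.toReal_ofReal (by linarith)]
        ring
      have hle2 : (∫ x in Set.Icc (-T) T, h x ^ 2)/(2*δ) ≤ (∫ x, h x ^ 2)/(2*δ) := by
        gcongr
        exact Filter.Eventually.of_forall fun x => sq_nonneg _
        exact Measure.restrict_le_self
      rw [hsum, hvol] at hmono
      linarith
    have htail : ∫ x in (Set.Icc (-T) T)ᶜ, |h x| ≤ 8/T := by
      have hmono : ∫ x in (Set.Icc (-T) T)ᶜ, |h x|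
          ≤ ∫ x in (Set.Icc (-T) T)ᶜ, |x| * |h x|/T := by
        apply setIntegral_mono_on habs.integrableOn (hxh_int.div_const T).integrableOn hs.compl
        intro x hx
        have hxT : T ≤ |x| := by
          simp only [Set.mem_compl_iff, Set.mem_Icc, not_and_or, not_le] at hx
          rcases hx with hx | hx
          · calc T ≤ -x := by linarith
              _ ≤ |x| := neg_le_abs x
          · calc T ≤ x := le_of_lt hx
              _ ≤ |x| := le_abs_self x
        calc |h x| = T * |h x|/T := by field_simp
          _ ≤ |x| * |h x|/T := by gcongr
      have h2 : ∫ x in (Set.Icc (-T) T)ᶜ, |x| * |h x|/T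
          = (∫ x in (Set.Icc (-T) T)ᶜ, |x| * |h x|)/T := integral_div _ _
      have h3 : ∫ x in (Set.Icc (-T) T)ᶜ, |x| * |h x| ≤ ∫ x, |x| * |h x| :=
        setIntegral_le_integral hxh_int
          (Filter.Eventually.of_forall fun x => mul_nonneg (abs_nonneg _) (abs_nonneg _))
      rw [h2] at hmono
      calc ∫ x in (Set.Icc (-T) T)ᶜ, |h x| ≤ (∫ x in (Set.Icc (-T) T)ᶜ, |x| * |h x|)/T := hmono
        _ ≤ 8/T := by gcongr; linarith
    linarith
  set ε : ℝ := Real.sqrt (∫ x, h x ^ 2) with hε_def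
  have hε0 : 0 ≤ ε := Real.sqrt_nonneg _
  have hε2 : ε ^ 2 = ∫ x, h x ^ 2 := Real.sq_sqrt hsq_nonneg
  rcases eq_or_lt_of_le hε0 with heq | hpos
  · have hE2 : (∫ x, h x ^ 2) = 0 := by rw [← hε2, ← heq]; norm_num
    have hL : ∫ x, |h x| ≤ 0 := by
      by_contra hc
      push_neg at hc
      have h1 := master (16/(∫ x, |h x|)) ((∫ x, |h x|)^2/64) (by positivity) (by positivity)
      rw [hE2] at h1
      have e2 : ((∫ x, |h x|)^2/64) * (16/(∫ x, |h x|)) = (∫ x, |h x|)/4 := by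
        field_simp
        ring
      have e3 : 8/(16/(∫ x, |h x|)) = (∫ x, |h x|)/2 := by
        rw [div_div_eq_mul_div]
        ring
      rw [e2, e3, zero_div] at h1
      linarith
    have hR : (0:ℝ) ≤ 11 * ε ^ ((2:ℝ)/3) := by positivity
    linarith
  · have h1 := master (ε ^ (-(2:ℝ)/3)) (ε ^ ((4:ℝ)/3))
      (Real.rpow_pos_of_pos hpos _) (Real.rpow_pos_of_pos hpos _)
    have e1 : (∫ x, h x ^ 2)/(2 * ε ^ ((4:ℝ)/3)) = ε ^ ((2:ℝ)/3)/2 := by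
      rw [← hε2, ← Real.rpow_natCast ε 2]
      rw [show ε ^ ((2:ℕ):ℝ) / (2 * ε ^ ((4:ℝ)/3)) = (ε ^ ((2:ℕ):ℝ) / ε ^ ((4:ℝ)/3))/2 by ring]
      rw [← Real.rpow_sub hpos]
      norm_num
    have e2 : ε ^ ((4:ℝ)/3) * ε ^ (-(2:ℝ)/3) = ε ^ ((2:ℝ)/3) := by
      rw [← Real.rpow_add hpos]
      norm_num
    have e3 : 8 / ε ^ (-(2:ℝ)/3) = 8 * ε ^ ((2:ℝ)/3) := by
      rw [show -(2:ℝ)/3 = -((2:ℝ)/3) by ring, Real.rpow_neg (le_of_lt hpos), div_eq_mul_inv, inv_inv]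
    rw [e1, e2, e3] at h1
    have hnn : 0 ≤ ε ^ ((2:ℝ)/3) := Real.rpow_nonneg hε0 _
    linarith
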